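/- Every congruence on a finitely generated commutative monoid is finitely generated: if A is a commutative monoid generated by finitely many elements and C is a congruence on A, then there exist finitely many pairs (a_1,b_1),…,(a_n,b_n) ∈ A × A such that C is the smallest congruence containing all (a_i,b_i). -/

import Mathlib

open MonoidAlgebra

/-- The binomial ideal associated to a relation on a commutative monoid. -/
noncomputable def redeiIdeal {A : Type*} [CommMonoid A] (r : A → A → Prop) :
    Ideal (MonoidAlgebra ℚ A) :=
  Ideal.span {x | ∃ p q, r p q ∧ x = of ℚ A p - of ℚ A q}

lemma redeiIdeal_mono {A : Type*} [CommMonoid A] {r s : A → A → Prop}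
    (h : ∀ p q, r p q → s p q) : redeiIdeal r ≤ redeiIdeal s :=
  Ideal.span_mono (fun _ ⟨p, q, hpq, hx⟩ => ⟨p, q, h p q hpq, hx⟩)

/-- Key lemma: membership in a congruence is detected by the binomial ideal. -/
lemma redei_mem_iff {A : Type*} [CommMonoid A] (C : Con A) (a b : A) :
    C a b ↔ of ℚ A a - of ℚ A b ∈ redeiIdeal (⇑C) := by
  constructor
  · intro hab
    exact Ideal.subset_span ⟨a, b, hab, rfl⟩
  · intro hmem
    -- map to the monoid algebra of the quotient monoid
    let f : MonoidAlgebra ℚ A →+* MonoidAlgebra ℚ C.Quotient :=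
      mapDomainRingHom ℚ C.mk'
    have hker : redeiIdeal (⇑C) ≤ RingHom.ker f := by
      rw [redeiIdeal, Ideal.span_le]
      rintro x ⟨p, q, hpq, rfl⟩
      have : f (of ℚ A p) = f (of ℚ A q) := by
        show MonoidAlgebra.mapDomain _ _ = MonoidAlgebra.mapDomain _ _
        simp only [MonoidAlgebra.of_apply, MonoidAlgebra.mapDomain_single]
        congr 1
        exact C.eq.2 hpq
      simpa [RingHom.mem_ker, map_sub, sub_eq_zero] using this
    have := hker hmem
    rw [RingHom.mem_ker, map_sub, sub_eq_zero] at this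
    have h2 : MonoidAlgebra.mapDomain (⇑C.mk') (MonoidAlgebra.single a (1 : ℚ)) =
        MonoidAlgebra.mapDomain (⇑C.mk') (MonoidAlgebra.single b (1 : ℚ)) := this
    rw [MonoidAlgebra.mapDomain_single, MonoidAlgebra.mapDomain_single] at h2
    have h3 : (C.mk' a : C.Quotient) = C.mk' b :=
      MonoidAlgebra.single_left_injective (one_ne_zero) h2
    exact C.eq.1 h3

/-- Rédei's theorem: every congruence on a finitely generated commutative monoid is
finitely generated. -/
theorem con_fg_of_monoid_fg {A : Type*} [CommMonoid A] (h : Monoid.FG A)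
    (C : Con A) :
    ∃ s : Finset (A × A), C = conGen (fun x y => (x, y) ∈ s) := by
  classical
  haveI : Monoid.FG A := h
  haveI : IsNoetherianRing (MonoidAlgebra ℚ A) :=
    Algebra.FiniteType.isNoetherianRing ℚ (MonoidAlgebra ℚ A)
  -- the binomial ideal of C is finitely generated
  have hfg : (redeiIdeal (⇑C)).FG := IsNoetherian.noetherian _
  obtain ⟨G, hG⟩ := hfg
  -- every generator lies in the span of a finite subset of the binomials
  have hmem : ∀ g ∈ (G : Set (MonoidAlgebra ℚ A)), ∃ T : Finset (MonoidAlgebra ℚ A),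
      ↑T ⊆ {x | ∃ p q, C p q ∧ x = of ℚ A p - of ℚ A q} ∧
      g ∈ Ideal.span (T : Set (MonoidAlgebra ℚ A)) := by
    intro g hg
    have : g ∈ redeiIdeal (⇑C) := by rw [← hG]; exact Ideal.subset_span hg
    exact Submodule.mem_span_finite_of_mem_span this
  choose T hT1 hT2 using hmem
  -- the union of these finite subsets
  set U : Finset (MonoidAlgebra ℚ A) := G.attach.biUnion (fun g => T g g.2) with hU
  have hUsub : (U : Set (MonoidAlgebra ℚ A)) ⊆
      {x | ∃ p q, C p q ∧ x = of ℚ A p - of ℚ A q} := by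
    intro x hx
    simp only [hU, Finset.coe_biUnion, Set.mem_iUnion, Finset.mem_coe] at hx
    obtain ⟨g, _, hg⟩ := hx
    exact hT1 g g.2 hg
  have hUspan : redeiIdeal (⇑C) ≤ Ideal.span (U : Set (MonoidAlgebra ℚ A)) := by
    rw [← hG, Ideal.span_le]
    intro g hg
    refine Submodule.span_mono ?_ (hT2 g hg)
    intro x hx
    simp only [hU, Finset.coe_biUnion, Set.mem_iUnion, Finset.mem_coe]
    exact ⟨⟨g, hg⟩, Finset.mem_attach _ _, hx⟩
  -- choose pairs for each element of U
  have hchoice : ∀ x ∈ U, ∃ pq : A × A, C pq.1 pq.2 ∧ x = of ℚ A pq.1 - of ℚ A pq.2 := by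
    intro x hx
    obtain ⟨p, q, hpq, hxe⟩ := hUsub hx
    exact ⟨(p, q), hpq, hxe⟩
  choose pq hpq1 hpq2 using hchoice
  refine ⟨U.attach.image (fun x => pq x.1 x.2), ?_⟩
  set s : Finset (A × A) := U.attach.image (fun x => pq x.1 x.2) with hs
  have hsC : ∀ p q : A, (p, q) ∈ s → C p q := by
    intro p q hpq
    simp only [hs, Finset.mem_image] at hpq
    obtain ⟨x, _, hx⟩ := hpq
    have := hpq1 x.1 x.2
    rw [hx] at this
    exact this
  apply le_antisymm
  · -- C ≤ conGen s
    intro a b hab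
    rw [redei_mem_iff] at hab
    have h1 : of ℚ A a - of ℚ A b ∈ Ideal.span (U : Set (MonoidAlgebra ℚ A)) := hUspan hab
    have h2 : Ideal.span (U : Set (MonoidAlgebra ℚ A)) ≤
        redeiIdeal (fun p q => (p, q) ∈ s) := by
      rw [Ideal.span_le]
      intro x hx
      have hmem' : (pq x hx).1 ∈ Prod.fst '' (s : Set (A × A)) := by
        simp only [hs, Finset.coe_image]
        exact ⟨pq x hx, ⟨⟨x, hx⟩, by simp, rfl⟩, rfl⟩
      have hin : (pq x hx) ∈ s := by
        simp only [hs, Finset.mem_image]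
        exact ⟨⟨x, hx⟩, Finset.mem_attach _ _, rfl⟩
      exact Ideal.subset_span ⟨(pq x hx).1, (pq x hx).2, hin, hpq2 x hx⟩
    have h3 : of ℚ A a - of ℚ A b ∈ redeiIdeal ⇑(conGen (fun x y => (x, y) ∈ s)) :=
      redeiIdeal_mono (fun p q hpq => ConGen.Rel.of p q hpq) (h2 h1)
    exact (redei_mem_iff (conGen (fun x y => (x, y) ∈ s)) a b).2 h3
  · exact Con.conGen_le.2 (fun x y hxy => hsC x y hxy)
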